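/- Let Λ, λ, μ, e, L be positive reals with μ < λ, and let z_T ≥ z_C with 0 ≤ z_T − z_C < Λ·e·L/((λ−μ)(e+L)). Set R_s = (z_T − z_C)·Λ·μ/λ and R_d = (z_T − z_C)·Λ·μ/λ + ((z_T − z_C)²·μ(e+L)/(2eL))·(1 − μ/λ)². Then R_s ≥ (2/(3 − μ/λ))·R_d. -/

import Mathlib

/-- Revenue-ratio guarantee in the low transit-cost regime of the bottleneck
model with an outside option. -/
theorem revenue_ratio_low_regime
    (Lam lam mu e L zT zC : ℝ)
    (hLam : 0 < Lam) (hlam : 0 < lam) (hmu : 0 < mu) (he : 0 < e) (hL : 0 < L)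
    (hmulam : mu < lam) (hz : zC ≤ zT)
    (hlow1 : 0 ≤ zT - zC)
    (hlow2 : zT - zC < Lam * e * L / ((lam - mu) * (e + L))) :
    (zT - zC) * Lam * mu / lam ≥
      (2 / (3 - mu / lam)) *
        ((zT - zC) * Lam * mu / lam +
          ((zT - zC) ^ 2 * mu * (e + L) / (2 * e * L)) * (1 - mu / lam) ^ 2) := by
  have hlm : 0 < lam - mu := sub_pos.mpr hmulam
  have hd : 0 < (lam - mu) * (e + L) := mul_pos hlm (by positivity)
  have hkey : (zT - zC) * ((lam - mu) * (e + L)) ≤ Lam * e * L := by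
    have := (lt_div_iff₀ hd).mp hlow2
    linarith
  have hr : mu / lam < 1 := (div_lt_one hlam).mpr hmulam
  have h3 : 0 < 3 - mu / lam := by linarith
  rw [ge_iff_le, div_mul_eq_mul_div, div_le_iff₀ h3]
  have h1 : 0 ≤ (zT - zC) * (lam - mu) * mu := mul_nonneg (mul_nonneg hlow1 hlm.le) hmu.le
  have h2 : 0 ≤ (Lam * e * L - (zT - zC) * ((lam - mu) * (e + L))) * ((zT - zC) * (lam - mu) * mu) :=
    mul_nonneg (by linarith) h1
  have e1 : (1 : ℝ) - mu / lam = (lam - mu) / lam := by field_simp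
  rw [e1]
  have h2eL : (0:ℝ) ≠ 2 * e * L := by positivity
  field_simp
  nlinarith [h2, mul_nonneg (mul_nonneg hlow1 hlm.le) (sub_nonneg.2 hkey), sq_nonneg lam, mul_pos he hL, mul_pos hmu hlam, mul_pos hlam hlam,
    mul_nonneg h1 (mul_pos he hL).le, mul_nonneg h2 (mul_pos hlam hlam).le]
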